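/- For integers n ≥ 3 and a, b ≥ 0, one has dim(b,a) = Σ_{c=0}^{a} dim₀(b,c), where dim(b,a) = ((b+1)/(n-1))·binom(a+b+n-1, n-2)·binom(a+n-2, n-2) and dim₀(d,c) = ((1+d)(2c+d+n-1)/((n-1)(n-2)))·binom(c+d+n-2, n-3)·binom(c+n-3, n-3). -/

import Mathlib

lemma choose_ratio (t k : ℕ) : (((k + t).choose (k+1)) : ℚ) * (k+1) = ((k + t).choose k) * t := by
  have := Nat.choose_succ_right_eq (k + t) k
  have h : k + t - k = t := by omega
  rw [h] at this
  exact_mod_cast congrArg (Nat.cast : ℕ → ℚ) this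

/-- Dimension consistency of the branching rule
`V(bλ_1 + aλ_2) = ⊕_{c=0}^{a} V_0(bλ_1 + cλ_2)` for `A_{n-1} ↓ C_l` (`n = 2l`):
`dim(b,a) = Σ_{c=0}^{a} dim₀(b,c)` where
`dim(b,a) = ((b+1)/(n-1))·C(a+b+n-1, n-2)·C(a+n-2, n-2)` and
`dim₀(d,c) = ((1+d)(2c+d+n-1)/((n-1)(n-2)))·C(c+d+n-2, n-3)·C(c+n-3, n-3)`. -/
theorem stmt_5 (n a b : ℕ) (hn : 3 ≤ n) :
    (((b : ℚ) + 1) / ((n : ℚ) - 1))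
        * ((a + b + n - 1).choose (n - 2) : ℚ) * ((a + n - 2).choose (n - 2) : ℚ)
      = ∑ c ∈ Finset.range (a + 1),
        ((1 + (b : ℚ)) * (2 * (c : ℚ) + b + (n : ℚ) - 1) / (((n : ℚ) - 1) * ((n : ℚ) - 2)))
          * ((c + b + n - 2).choose (n - 3) : ℚ) * ((c + n - 3).choose (n - 3) : ℚ) := by
  obtain ⟨m, rfl⟩ : ∃ m, n = m + 3 := ⟨n - 3, by omega⟩
  have e1 : ∀ x : ℕ, x + (m + 3) - 1 = x + (m + 2) := fun x => by omega
  have e2 : ∀ x : ℕ, x + (m + 3) - 2 = x + (m + 1) := fun x => by omega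
  have e3 : ∀ x : ℕ, x + (m + 3) - 3 = x + m := fun x => by omega
  have e4 : m + 3 - 2 = m + 1 := by omega
  have e5 : m + 3 - 3 = m := by omega
  simp only [e1, e2, e3, e4, e5]
  have hm1 : ((m : ℚ) + 1) ≠ 0 := by positivity
  have hm2 : ((m : ℚ) + 2) ≠ 0 := by positivity
  induction a with
  | zero =>
    simp only [Finset.sum_range_one, Nat.cast_zero, Nat.zero_add, zero_add,
      Nat.choose_self, Nat.cast_one]
    have hr := choose_ratio (b+1) m
    push_cast at hr
    have c1 : b + (m + 2) = m + (b + 1) + 1 := by omega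
    have c2 : b + (m + 1) = m + (b + 1) := by omega
    rw [c1, c2, Nat.choose_succ_succ (m + (b+1)) m]
    push_cast
    rw [show ((m:ℚ)+3-1) = ((m:ℚ)+2) from by ring, show ((m:ℚ)+3-2) = ((m:ℚ)+1) from by ring]
    generalize ((m + (b+1)).choose m : ℚ) = A' at hr ⊢
    generalize ((m + (b+1)).choose (m+1) : ℚ) = A at hr ⊢
    field_simp
    linear_combination ((b:ℚ)+1) * hr
  | succ a ih =>
    rw [Finset.sum_range_succ, ← ih]
    have c1 : a + 1 + b + (m + 2) = (a + b + (m + 2)) + 1 := by omega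
    have c2 : a + 1 + (m + 1) = (a + (m + 1)) + 1 := by omega
    have c3 : a + 1 + b + (m + 1) = a + b + (m + 2) := by omega
    have c4 : a + 1 + m = a + (m + 1) := by omega
    rw [c1, c2, c3, c4, Nat.choose_succ_succ (a + b + (m+2)) m,
      Nat.choose_succ_succ (a + (m+1)) m]
    have hr1 : (((a + b + (m+2)).choose (m+1)) : ℚ) * (m+1)
        = ((a + b + (m+2)).choose m) * (a + b + 2) := by
      have := choose_ratio (a + b + 2) m
      have h : m + (a + b + 2) = a + b + (m + 2) := by omega
      rw [h] at this; push_cast at this ⊢; linarith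
    have hr2 : (((a + (m+1)).choose (m+1)) : ℚ) * (m+1)
        = ((a + (m+1)).choose m) * (a + 1) := by
      have := choose_ratio (a + 1) m
      have h : m + (a + 1) = a + (m + 1) := by omega
      rw [h] at this; push_cast at this ⊢; linarith
    push_cast
    rw [show ((m:ℚ)+3-1) = ((m:ℚ)+2) from by ring, show ((m:ℚ)+3-2) = ((m:ℚ)+1) from by ring]
    generalize ((a + b + (m+2)).choose m : ℚ) = A' at hr1 ⊢
    generalize ((a + b + (m+2)).choose (m+1) : ℚ) = A at hr1 ⊢
    generalize ((a + (m+1)).choose m : ℚ) = B' at hr2 ⊢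
    generalize ((a + (m+1)).choose (m+1) : ℚ) = B at hr2 ⊢
    field_simp
    linear_combination (((b:ℚ)+1) * B') * hr1 + (((b:ℚ)+1) * A') * hr2
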